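/- Let N ≥ 1 be an integer, r > 0, and p ∈ ℂ with |p| > 1. Let f : D_r → ℂᴺ be holomorphic on the open disk D_r = {z ∈ ℂ : |z| < r}, written in components f = (f₁, …, f_N). For each i ∈ {1,…,N}, let P_i and Q_i be polynomials in N complex variables such that the function z ↦ Q_i(f(z)) is not identically zero on D_r, and assume the difference equation f_i(pz)·Q_i(f(z)) = P_i(f(z)) holds for every z with |z| < r/|p| and every i. Then each component f_i extends to a meromorphic function on all of ℂ: there exist functions F₁, …, F_N meromorphic on ℂ with F_i(z) = f_i(z) for every z ∈ D_r. -/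

import Mathlib

open Filter Metric MvPolynomial Topology

lemma analyticAt_eval_comp {N : ℕ} {G : Fin N → ℂ → ℂ} {x : ℂ}
    (hG : ∀ j, AnalyticAt ℂ (G j) x) (R : MvPolynomial (Fin N) ℂ) :
    AnalyticAt ℂ (fun z => MvPolynomial.eval (fun j => G j z) R) x := by
  induction R using MvPolynomial.induction_on with
  | C a => simpa using analyticAt_const
  | add p q hp hq => simpa [MvPolynomial.eval_add, Pi.add_def] using hp.add hq
  | mul_X p j hp => simpa [MvPolynomial.eval_mul, Pi.mul_def] using hp.mul (hG j)

lemma meromorphicAt_eval_comp {N : ℕ} {G : Fin N → ℂ → ℂ} {x : ℂ}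
    (hG : ∀ j, MeromorphicAt (G j) x) (R : MvPolynomial (Fin N) ℂ) :
    MeromorphicAt (fun z => MvPolynomial.eval (fun j => G j z) R) x := by
  induction R using MvPolynomial.induction_on with
  | C a => simpa using MeromorphicAt.const a x
  | add p q hp hq => simpa [MvPolynomial.eval_add, Pi.add_def] using hp.add hq
  | mul_X p j hp => simpa [MvPolynomial.eval_mul, Pi.mul_def] using hp.mul (hG j)

lemma meromorphicAt_comp_div {g : ℂ → ℂ} {p x : ℂ} (hp : p ≠ 0)
    (h : MeromorphicAt g (x / p)) : MeromorphicAt (fun z => g (z / p)) x := by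
  obtain ⟨n, hn⟩ := h
  have hφ : AnalyticAt ℂ (fun z : ℂ => z / p) x := analyticAt_id.div analyticAt_const hp
  have h1 : AnalyticAt ℂ (fun z : ℂ => (z / p - x / p) ^ n • g (z / p)) x := by
    simpa [Function.comp_def] using AnalyticAt.comp (f := fun z : ℂ => z / p) hn hφ
  refine ⟨n, ?_⟩
  have key : (fun z : ℂ => (z - x) ^ n • g (z / p))
      = fun z => p ^ n • ((z / p - x / p) ^ n • g (z / p)) := by
    funext z
    simp only [smul_eq_mul, ← mul_assoc, ← mul_pow, div_sub_div_same]
    rw [mul_div_cancel₀ _ hp]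
  rw [key]
  exact (analyticAt_const (v := p ^ n)).smul h1

lemma eventually_ne_of_analyticOnNhd_ball {h : ℂ → ℂ} {R : ℝ}
    (hh : AnalyticOnNhd ℂ h (Metric.ball 0 R))
    (hne : ∃ z ∈ Metric.ball (0 : ℂ) R, h z ≠ 0) {x : ℂ}
    (hx : x ∈ Metric.ball (0 : ℂ) R) :
    ∀ᶠ z in 𝓝[≠] x, h z ≠ 0 := by
  rcases (hh x hx).eventually_eq_zero_or_eventually_ne_zero with h0 | h1
  · obtain ⟨z₀, hz₀, hz₀'⟩ := hne
    exact absurd (hh.eqOn_zero_of_preconnected_of_eventuallyEq_zero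
      (convex_ball (0:ℂ) R).isPreconnected hx h0 hz₀) hz₀'
  · exact h1

theorem meromorphic_continuation_of_difference_equation
    (N : ℕ) (hN : 1 ≤ N) (r : ℝ) (hr : 0 < r) (p : ℂ) (hp : 1 < ‖p‖)
    (f : Fin N → ℂ → ℂ)
    (hf : ∀ i, DifferentiableOn ℂ (f i) (Metric.ball (0 : ℂ) r))
    (P Q : Fin N → MvPolynomial (Fin N) ℂ)
    (hQ : ∀ i, ∃ z ∈ Metric.ball (0 : ℂ) r,
      MvPolynomial.eval (fun j => f j z) (Q i) ≠ 0)
    (heq : ∀ i, ∀ z : ℂ, ‖z‖ < r / ‖p‖ →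
      f i (p * z) * MvPolynomial.eval (fun j => f j z) (Q i)
        = MvPolynomial.eval (fun j => f j z) (P i)) :
    ∃ F : Fin N → ℂ → ℂ, ∀ i,
      MeromorphicOn (F i) (Set.univ : Set ℂ) ∧
        ∀ z ∈ Metric.ball (0 : ℂ) r, F i z = f i z := by
  classical
  set a := ‖p‖ with ha
  have ha1 : 1 < a := hp
  have ha0 : 0 < a := lt_trans one_pos hp
  have hp0 : p ≠ 0 := by
    intro h0
    rw [ha, h0, norm_zero] at ha1
    linarith
  have hpk : ∀ k : ℕ, (p ^ k : ℂ) ≠ 0 := fun k => pow_ne_zero k hp0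
  have habs : ∀ (z : ℂ) (k : ℕ), ‖z / p ^ k‖ = ‖z‖ / a ^ k := by
    intro z k; rw [norm_div, norm_pow]
  have hmb : ∀ (z : ℂ) (R : ℝ), z ∈ Metric.ball (0:ℂ) R ↔ ‖z‖ < R := by
    intro z R; rw [mem_ball_zero_iff]
  -- the iterates
  let g : ℕ → Fin N → ℂ → ℂ := fun n => Nat.rec f
    (fun _ gp i z => MvPolynomial.eval (fun j => gp j (z / p)) (P i)
      / MvPolynomial.eval (fun j => gp j (z / p)) (Q i)) n
  have hgs : ∀ n i z, g (n+1) i z = MvPolynomial.eval (fun j => g n j (z / p)) (P i)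
      / MvPolynomial.eval (fun j => g n j (z / p)) (Q i) := fun n i z => rfl
  have hfa : ∀ j, AnalyticOnNhd ℂ (f j) (Metric.ball 0 r) := fun j =>
    (hf j).analyticOnNhd Metric.isOpen_ball
  -- meromorphy of the iterates
  have hmero : ∀ n i, MeromorphicOn (g n i) (Metric.ball 0 (r * a ^ n)) := by
    intro n
    induction n with
    | zero => intro i; rw [pow_zero, mul_one]; exact (hfa i).meromorphicOn
    | succ n ih =>
      intro i x hx
      have hx' : x / p ∈ Metric.ball (0:ℂ) (r * a ^ n) := by
        rw [hmb] at hx ⊢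
        rw [norm_div, div_lt_iff₀ ha0]
        calc ‖x‖ < r * a ^ (n+1) := hx
          _ = r * a ^ n * a := by ring
      have hgj : ∀ j, MeromorphicAt (fun z => g n j (z / p)) x :=
        fun j => meromorphicAt_comp_div hp0 (ih j _ hx')
      exact (meromorphicAt_eval_comp hgj (P i)).div (meromorphicAt_eval_comp hgj (Q i))
  -- bad set
  let h : Fin N → ℂ → ℂ := fun i w => MvPolynomial.eval (fun j => f j (w / p)) (Q i)
  let Bad : Set ℂ := {z | ∃ k : ℕ, ∃ i, ‖z / p ^ k‖ < r ∧ h i (z / p ^ k) = 0}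
  -- one-step agreement
  have L : ∀ n, ∀ z : ℂ, ‖z‖ < r * a ^ n → z ∉ Bad →
      ∀ i, g (n+1) i z = g n i z := by
    intro n
    induction n with
    | zero =>
      intro z hz hB i
      have hz' : ‖z‖ < r := by simpa using hz
      have hq : MvPolynomial.eval (fun j => f j (z / p)) (Q i) ≠ 0 := by
        intro h0
        exact hB ⟨0, i, by simpa using hz', by simpa using h0⟩
      have harg : ‖z / p‖ < r / a := by
        rw [norm_div, div_lt_div_iff₀ ha0 ha0]
        nlinarith
      have hkey := heq i (z / p) harg
      rw [mul_div_cancel₀ _ hp0] at hkey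
      show MvPolynomial.eval (fun j => f j (z / p)) (P i)
          / MvPolynomial.eval (fun j => f j (z / p)) (Q i) = f i z
      rw [← hkey]
      exact mul_div_cancel_right₀ _ hq
    | succ n ih =>
      intro z hz hB i
      have hz' : ‖z / p‖ < r * a ^ n := by
        rw [norm_div, div_lt_iff₀ ha0]
        calc ‖z‖ < r * a ^ (n+1) := hz
          _ = r * a ^ n * a := by ring
      have hB' : z / p ∉ Bad := by
        rintro ⟨k, i', hk1, hk2⟩
        refine hB ⟨k+1, i', ?_, ?_⟩
        · rwa [pow_succ', ← div_div]
        · rwa [pow_succ', ← div_div]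
      have key : (fun j => g (n+1) j (z / p)) = (fun j => g n j (z / p)) :=
        funext fun j => ih (z / p) hz' hB' j
      rw [hgs (n+1) i z, hgs n i z, key]
  -- multi-step agreement
  have L' : ∀ n m, n ≤ m → ∀ z : ℂ, ‖z‖ < r * a ^ n → z ∉ Bad →
      ∀ i, g m i z = g n i z := by
    intro n m hnm
    induction m, hnm using Nat.le_induction with
    | base => intro z _ _ i; rfl
    | succ m hm ihm =>
      intro z hz hB i
      have hzm : ‖z‖ < r * a ^ m := by
        refine lt_of_lt_of_le hz ?_
        have : a ^ n ≤ a ^ m := pow_le_pow_right₀ ha1.le hm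
        nlinarith
      rw [L m z hzm hB i, ihm z hz hB i]
  -- analyticity of h
  have hhA : ∀ i, AnalyticOnNhd ℂ (h i) (Metric.ball 0 (r * a)) := by
    intro i w hw
    have hw' : w / p ∈ Metric.ball (0:ℂ) r := by
      rw [hmb] at hw ⊢
      rw [norm_div, div_lt_iff₀ ha0]
      linarith
    have hj : ∀ j, AnalyticAt ℂ (fun z => f j (z / p)) w := by
      intro j
      simpa [Function.comp_def] using AnalyticAt.comp (f := fun z : ℂ => z / p)
        ((hfa j) (w / p) hw') (analyticAt_id.div analyticAt_const hp0)
    exact analyticAt_eval_comp hj (Q i)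
  have hhne : ∀ i, ∃ w ∈ Metric.ball (0:ℂ) (r * a), h i w ≠ 0 := by
    intro i
    obtain ⟨z₀, hz₀, hz₀'⟩ := hQ i
    rw [hmb] at hz₀
    refine ⟨p * z₀, ?_, ?_⟩
    · rw [hmb, norm_mul]
      calc a * ‖z₀‖ < a * r := by
            exact mul_lt_mul_of_pos_left hz₀ ha0
        _ = r * a := by ring
    · show MvPolynomial.eval (fun j => f j ((p * z₀) / p)) (Q i) ≠ 0
      rwa [mul_div_cancel_left₀ _ hp0]
  -- scaled functions
  have hHA : ∀ k i, AnalyticOnNhd ℂ (fun z => h i (z / p ^ k))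
      (Metric.ball 0 (r * a ^ (k+1))) := by
    intro k i w hw
    have hw' : w / p ^ k ∈ Metric.ball (0:ℂ) (r * a) := by
      rw [hmb] at hw ⊢
      rw [habs, div_lt_iff₀ (pow_pos ha0 k)]
      calc ‖w‖ < r * a ^ (k+1) := hw
        _ = r * a * a ^ k := by ring
    simpa [Function.comp_def] using AnalyticAt.comp (f := fun z : ℂ => z / p ^ k)
      ((hhA i) _ hw') (analyticAt_id.div analyticAt_const (hpk k))
  have hHne : ∀ k i, ∃ w ∈ Metric.ball (0:ℂ) (r * a ^ (k+1)), h i (w / p ^ k) ≠ 0 := by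
    intro k i
    obtain ⟨w₀, hw₀, hw₀'⟩ := hhne i
    rw [hmb] at hw₀
    refine ⟨p ^ k * w₀, ?_, ?_⟩
    · rw [hmb, norm_mul, norm_pow]
      calc a ^ k * ‖w₀‖ < a ^ k * (r * a) :=
            mul_lt_mul_of_pos_left hw₀ (pow_pos ha0 k)
        _ = r * a ^ (k+1) := by ring
    · rwa [mul_div_cancel_left₀ _ (hpk k)]
  -- each level is eventually clean near every point
  have clean : ∀ (x : ℂ) (k : ℕ), ∀ᶠ z in 𝓝[≠] x, ∀ i,
      ¬(‖z / p ^ k‖ < r ∧ h i (z / p ^ k) = 0) := by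
    intro x k
    by_cases hcase : ‖x‖ < r * a ^ (k+1)
    · have hev : ∀ᶠ z in 𝓝[≠] x, ∀ i, h i (z / p ^ k) ≠ 0 := by
        rw [eventually_all]
        intro i
        exact eventually_ne_of_analyticOnNhd_ball (hHA k i) (hHne k i)
          ((hmb x _).mpr hcase)
      exact hev.mono fun z hz i hcon => hz i hcon.2
    · push_neg at hcase
      have hxgt : r * a ^ k < ‖x‖ := by
        refine lt_of_lt_of_le ?_ hcase
        have h1 : 0 < r * a ^ k := mul_pos hr (pow_pos ha0 k)
        calc r * a ^ k = r * a ^ k * 1 := by ring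
          _ < r * a ^ k * a := by exact mul_lt_mul_of_pos_left ha1 h1
          _ = r * a ^ (k+1) := by ring
      have hev : ∀ᶠ z in 𝓝 x, r * a ^ k < ‖z‖ :=
        (isOpen_lt continuous_const continuous_norm).eventually_mem hxgt
      refine (hev.filter_mono nhdsWithin_le_nhds).mono fun z hz i hcon => ?_
      have : r < ‖z / p ^ k‖ := by
        rw [habs, lt_div_iff₀ (pow_pos ha0 k)]
        linarith
      linarith [hcon.1]
  -- uniform control near 0
  have hsmall : ∃ ε > 0, ∀ w : ℂ, w ≠ 0 → ‖w‖ < ε → ∀ i, h i w ≠ 0 := by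
    have h0mem : (0:ℂ) ∈ Metric.ball (0:ℂ) (r * a) := by
      rw [hmb]; simpa using mul_pos hr ha0
    have hev : ∀ᶠ w in 𝓝[≠] (0:ℂ), ∀ i, h i w ≠ 0 := by
      rw [eventually_all]
      intro i
      exact eventually_ne_of_analyticOnNhd_ball (hhA i) (hhne i) h0mem
    rw [eventually_nhdsWithin_iff, Metric.eventually_nhds_iff] at hev
    obtain ⟨ε, hε, hball⟩ := hev
    refine ⟨ε, hε, fun w hw0 hwε i => ?_⟩
    exact hball (by simpa [Complex.dist_eq] using hwε) (by simpa using hw0) i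
  -- the bad set is thin
  have thin : ∀ x : ℂ, ∀ᶠ z in 𝓝[≠] x, z ∉ Bad := by
    intro x
    obtain ⟨ε, hε, hεne⟩ := hsmall
    obtain ⟨K, hK⟩ := pow_unbounded_of_one_lt ((‖x‖ + 1) / ε) ha1
    have hz0 : ∀ᶠ z in 𝓝[≠] x, z ≠ 0 := by
      rcases eq_or_ne x 0 with rfl | hx
      · exact eventually_mem_nhdsWithin.mono fun z hz => hz
      · exact (isOpen_compl_singleton.eventually_mem hx).filter_mono nhdsWithin_le_nhds
    have hnear : ∀ᶠ z in 𝓝[≠] x, ‖z‖ < ‖x‖ + 1 := by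
      refine Filter.Eventually.filter_mono nhdsWithin_le_nhds ?_
      exact (isOpen_lt continuous_norm continuous_const).eventually_mem
        (by simp only [Set.mem_setOf_eq]; linarith)
    have hlow : ∀ᶠ z in 𝓝[≠] x, ∀ k ∈ Finset.range K, ∀ i,
        ¬(‖z / p ^ k‖ < r ∧ h i (z / p ^ k) = 0) :=
      (Filter.eventually_all_finset _).mpr fun k _ => clean x k
    filter_upwards [hz0, hnear, hlow] with z hz1 hz2 hz3
    rintro ⟨k, i, hk1, hk2⟩
    by_cases hkK : k < K
    · exact hz3 k (Finset.mem_range.mpr hkK) i ⟨hk1, hk2⟩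
    · push_neg at hkK
      have hlt : ‖z / p ^ k‖ < ε := by
        rw [habs]
        have hKk : a ^ K ≤ a ^ k := pow_le_pow_right₀ ha1.le hkK
        have h1 : ‖z‖ / a ^ k ≤ ‖z‖ / a ^ K :=
          div_le_div_of_nonneg_left (norm_nonneg z) (pow_pos ha0 K) hKk
        have h2 : ‖z‖ / a ^ K < (‖x‖ + 1) / a ^ K := by
          rw [div_lt_div_iff₀ (pow_pos ha0 K) (pow_pos ha0 K)]
          nlinarith [pow_pos ha0 K]
        have h3 : (‖x‖ + 1) / a ^ K < ε := by
          rw [div_lt_iff₀ (pow_pos ha0 K)]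
          rw [div_lt_iff₀ hε] at hK
          nlinarith [pow_pos ha0 K]
        linarith
      exact hεne _ (div_ne_zero hz1 (hpk k)) hlt i hk2
  -- existence of enclosing radii
  have hex : ∀ z : ℂ, ∃ n : ℕ, ‖z‖ < r * a ^ n := by
    intro z
    obtain ⟨n, hn⟩ := pow_unbounded_of_one_lt (‖z‖ / r) ha1
    refine ⟨n, ?_⟩
    rw [div_lt_iff₀ hr] at hn
    calc ‖z‖ < a ^ n * r := hn
      _ = r * a ^ n := by ring
  refine ⟨fun i z => g (Nat.find (hex z)) i z, fun i => ⟨?_, ?_⟩⟩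
  · intro x _
    obtain ⟨n₀, hn₀⟩ := hex x
    have hxball : x ∈ Metric.ball (0:ℂ) (r * a ^ n₀) := (hmb x _).mpr hn₀
    have hEq : (fun z => g n₀ i z) =ᶠ[𝓝[≠] x]
        (fun z => g (Nat.find (hex z)) i z) := by
      have hball : ∀ᶠ z in 𝓝[≠] x, ‖z‖ < r * a ^ n₀ := by
        refine Filter.Eventually.filter_mono nhdsWithin_le_nhds ?_
        exact (isOpen_lt continuous_norm continuous_const).eventually_mem hn₀
      filter_upwards [hball, thin x] with z hz1 hz2
      have hfind : Nat.find (hex z) ≤ n₀ := Nat.find_le hz1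
      exact L' (Nat.find (hex z)) n₀ hfind z (Nat.find_spec (hex z)) hz2 i
    exact ((hmero n₀ i) x hxball).congr hEq
  · intro z hz
    have h0 : ‖z‖ < r * a ^ 0 := by
      simpa using (hmb z r).mp hz
    have hfind0 : Nat.find (hex z) = 0 := Nat.find_eq_zero (hex z) |>.mpr h0
    show g (Nat.find (hex z)) i z = f i z
    rw [hfind0]
    rfl
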